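/- Let S ⊆ ℝⁿ determine a cube tiling of ℝⁿ, let k ∈ {1,…,n}, let α ∈ ℝ, and set V = {v ∈ S : v_k − α ∈ ℤ}. Then for every integer m, the set U = (V − m·e_k) ∪ (S \ V) determines a cube tiling of ℝⁿ, where e_k is the k-th standard basis vector. -/

import Mathlib

/-- The half-open unit cube `[0,1)ⁿ` translated by `t`. -/
def Cube {n : ℕ} (t : Fin n → ℝ) : Set (Fin n → ℝ) :=
  {x | ∀ j, t j ≤ x j ∧ x j < t j + 1}

/-- `T` determines a cube tiling of `ℝⁿ`: the cubes `[0,1)ⁿ + t`, `t ∈ T`,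
are pairwise disjoint and their union is all of `ℝⁿ`. -/
def IsCubeTiling {n : ℕ} (T : Set (Fin n → ℝ)) : Prop :=
  (∀ s ∈ T, ∀ t ∈ T, s ≠ t → Disjoint (Cube s) (Cube t)) ∧
  (⋃ t ∈ T, Cube t) = Set.univ

/-- `T ⊆ ℝ` determines a tiling of `ℝ` by unit intervals `[0,1) + t`. -/
def IsCubeTiling1 (T : Set ℝ) : Prop :=
  (∀ s ∈ T, ∀ t ∈ T, s ≠ t → Disjoint (Set.Ico s (s + 1)) (Set.Ico t (t + 1))) ∧
  (⋃ t ∈ T, Set.Ico t (t + 1)) = Set.univ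

/-- The tiling determined by `T` contains a column: there are `s ∈ ℝⁿ` and a
standard basis vector `eᵢ` such that `s + k·eᵢ ∈ T` for every `k ∈ ℤ`. -/
def ContainsColumn {n : ℕ} (T : Set (Fin n → ℝ)) : Prop :=
  ∃ s : Fin n → ℝ, ∃ i : Fin n, ∀ k : ℤ, (s + (k : ℝ) • (Pi.single i 1 : Fin n → ℝ)) ∈ T

/-- A natural code of `ℝⁿ`: each `ε j : ℝ → ℕ⁺` restricts to a bijection from
every coset `x + ℤ` onto the positive integers. -/
def IsNaturalCode {n : ℕ} (ε : Fin n → ℝ → ℕ+) : Prop :=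
  ∀ j : Fin n, ∀ x : ℝ, Set.BijOn (ε j) {y : ℝ | ∃ m : ℤ, y = x + m} Set.univ

lemma t1_succ {T : Set ℝ} (hT : IsCubeTiling1 T) {s : ℝ} (hs : s ∈ T) : s + 1 ∈ T := by
  have hcov : (s + 1 : ℝ) ∈ ⋃ t ∈ T, Set.Ico t (t + 1) := by rw [hT.2]; trivial
  simp only [Set.mem_iUnion, Set.mem_Ico] at hcov
  obtain ⟨u, hu, h1, h2⟩ := hcov
  rcases eq_or_lt_of_le h1 with h | h
  · exact h ▸ hu
  · exfalso
    have hsu : s < u := by linarith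
    exact Set.disjoint_left.mp (hT.1 s hs u hu (ne_of_lt hsu))
      ⟨le_of_lt hsu, h⟩ ⟨le_refl u, by linarith⟩

lemma t1_pred {T : Set ℝ} (hT : IsCubeTiling1 T) {s : ℝ} (hs : s ∈ T) : s - 1 ∈ T := by
  have hcov : (s - 1 : ℝ) ∈ ⋃ t ∈ T, Set.Ico t (t + 1) := by rw [hT.2]; trivial
  simp only [Set.mem_iUnion, Set.mem_Ico] at hcov
  obtain ⟨u, hu, h1, h2⟩ := hcov
  have hu1 : u + 1 ∈ T := t1_succ hT hu
  rcases eq_or_lt_of_le (show u + 1 ≤ s by linarith) with h | h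
  · have : u = s - 1 := by linarith
    exact this ▸ hu
  · exfalso
    exact Set.disjoint_left.mp (hT.1 (u + 1) hu1 s hs (by intro he; linarith))
      ⟨le_of_lt h, by linarith⟩ ⟨le_refl s, by linarith⟩

lemma t1_int {T : Set ℝ} (hT : IsCubeTiling1 T) {s : ℝ} (hs : s ∈ T) (z : ℤ) :
    s + z ∈ T := by
  induction z using Int.induction_on with
  | zero => simpa using hs
  | succ i ih => have := t1_succ hT ih; push_cast at this ⊢; convert this using 1; ring
  | pred i ih => have := t1_pred hT ih; push_cast at this ⊢; convert this using 1; ring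

lemma t1_int_diff {T : Set ℝ} (hT : IsCubeTiling1 T) {s t : ℝ} (hs : s ∈ T) (ht : t ∈ T) :
    ∃ z : ℤ, s - t = z := by
  by_contra h
  push_neg at h
  have h1 : s - t < (⌈s - t⌉ : ℝ) := lt_of_le_of_ne (Int.le_ceil _) (h _)
  have h2 : ((⌈s - t⌉ : ℤ) : ℝ) < s - t + 1 := Int.ceil_lt_add_one _
  have hu : t + (⌈s - t⌉ : ℝ) ∈ T := t1_int hT ht _
  have hne : s ≠ t + (⌈s - t⌉ : ℝ) := by intro he; exact h ⌈s - t⌉ (by linarith)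
  exact Set.disjoint_left.mp (hT.1 s hs _ hu hne)
    ⟨by linarith, by linarith⟩ ⟨le_refl _, by linarith⟩

lemma line_tiling {n : ℕ} {S : Set (Fin n → ℝ)} (hS : IsCubeTiling S) (k : Fin n)
    (x : Fin n → ℝ) :
    IsCubeTiling1 {c : ℝ | ∃ s ∈ S, s k = c ∧ ∀ j, j ≠ k → s j ≤ x j ∧ x j < s j + 1} := by
  constructor
  · rintro c ⟨s, hsS, hsk, hsl⟩ c' ⟨t, htS, htk, htl⟩ hne
    rw [Set.disjoint_left]
    rintro y ⟨hy1, hy2⟩ ⟨hy3, hy4⟩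
    have hst : s ≠ t := fun h => hne (by rw [← hsk, ← htk, h])
    have hmem : Function.update x k y ∈ Cube s := by
      intro j
      rcases eq_or_ne j k with rfl | hj
      · rw [Function.update_self]; exact ⟨hsk ▸ hy1, hsk ▸ hy2⟩
      · rw [Function.update_of_ne hj]; exact hsl j hj
    have hmem' : Function.update x k y ∈ Cube t := by
      intro j
      rcases eq_or_ne j k with rfl | hj
      · rw [Function.update_self]; exact ⟨htk ▸ hy3, htk ▸ hy4⟩
      · rw [Function.update_of_ne hj]; exact htl j hj
    exact Set.disjoint_left.mp (hS.1 s hsS t htS hst) hmem hmem'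
  · ext y
    simp only [Set.mem_iUnion, Set.mem_Ico, Set.mem_univ, iff_true]
    have hy : Function.update x k y ∈ ⋃ t ∈ S, Cube t := by rw [hS.2]; trivial
    simp only [Set.mem_iUnion] at hy
    obtain ⟨s, hsS, hsc⟩ := hy
    refine ⟨s k, ⟨s, hsS, rfl, fun j hj => ?_⟩, ?_⟩
    · have := hsc j; rwa [Function.update_of_ne hj] at this
    · have := hsc k; rwa [Function.update_self] at this

lemma line_diff {n : ℕ} {S : Set (Fin n → ℝ)} (hS : IsCubeTiling S) (k : Fin n)
    {x s t : Fin n → ℝ} (hsS : s ∈ S) (htS : t ∈ S)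
    (hs : ∀ j, j ≠ k → s j ≤ x j ∧ x j < s j + 1)
    (ht : ∀ j, j ≠ k → t j ≤ x j ∧ x j < t j + 1) :
    ∃ z : ℤ, s k - t k = z :=
  t1_int_diff (line_tiling hS k x) ⟨s, hsS, rfl, hs⟩ ⟨t, htS, rfl, ht⟩

lemma mem_cube_sub {n : ℕ} (k : Fin n) (m : ℤ) (v x : Fin n → ℝ) :
    x ∈ Cube (v - (m : ℝ) • (Pi.single k 1 : Fin n → ℝ)) ↔
      (x + (m : ℝ) • (Pi.single k 1 : Fin n → ℝ)) ∈ Cube v := by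
  simp only [Cube, Set.mem_setOf_eq, Pi.sub_apply, Pi.add_apply, Pi.smul_apply,
    smul_eq_mul]
  constructor <;> intro h j <;> obtain ⟨h1, h2⟩ := h j <;> constructor <;> linarith

lemma smul_single_apply_ne {n : ℕ} (k : Fin n) (m : ℤ) {j : Fin n} (hj : j ≠ k) :
    ((m : ℝ) • (Pi.single k 1 : Fin n → ℝ)) j = 0 := by
  simp [Pi.single_eq_of_ne hj]


/-- Shifting the cubes of a congruence class `V = {v ∈ S : v k − α ∈ ℤ}` by an
integer multiple of `e_k` again yields a cube tiling. -/
theorem shift_congruence_class_tiling {n : ℕ} (S : Set (Fin n → ℝ))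
    (hS : IsCubeTiling S) (k : Fin n) (α : ℝ) (m : ℤ) :
    IsCubeTiling
      (((fun v : Fin n → ℝ => v - (m : ℝ) • (Pi.single k 1 : Fin n → ℝ)) ''
          {v ∈ S | ∃ z : ℤ, v k - α = z}) ∪
        (S \ {v ∈ S | ∃ z : ℤ, v k - α = z})) := by
  set V := {v ∈ S | ∃ z : ℤ, v k - α = z} with hVdef
  set e := ((m : ℝ) • (Pi.single k 1 : Fin n → ℝ)) with he
  have key : ∀ (x s t : Fin n → ℝ), s ∈ S → t ∈ S →
      (∀ j, j ≠ k → s j ≤ x j ∧ x j < s j + 1) →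
      (∀ j, j ≠ k → t j ≤ x j ∧ x j < t j + 1) →
      (s ∈ V ↔ t ∈ V) := by
    intro x s t hsS htS hs ht
    obtain ⟨z, hz⟩ := line_diff hS k hsS htS hs ht
    constructor
    · rintro ⟨_, w, hw⟩
      exact ⟨htS, w - z, by push_cast; linarith⟩
    · rintro ⟨_, w, hw⟩
      exact ⟨hsS, w + z, by push_cast; linarith⟩
  -- cube of shifted v, line condition
  have lineOf : ∀ (x v : Fin n → ℝ), x ∈ Cube (v - e) →
      (∀ j, j ≠ k → v j ≤ x j ∧ x j < v j + 1) := by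
    intro x v hx j hj
    have := hx j
    simp only [Pi.sub_apply, he, smul_single_apply_ne k m hj, sub_zero] at this
    exact this
  constructor
  · rintro a ha b hb hne
    rw [Set.disjoint_left]
    rintro x hxa hxb
    rcases ha with ⟨s, hsV, rfl⟩ | haS
    · rcases hb with ⟨t, htV, rfl⟩ | hbS
      · -- both shifted
        have hst : s ≠ t := fun h => hne (by rw [h])
        have h1 : x + e ∈ Cube s := (mem_cube_sub k m s x).mp hxa
        have h2 : x + e ∈ Cube t := (mem_cube_sub k m t x).mp hxb
        exact Set.disjoint_left.mp (hS.1 s hsV.1 t htV.1 hst) h1 h2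
      · -- a shifted, b unshifted
        have hsl := lineOf x s hxa
        have htl : ∀ j, j ≠ k → b j ≤ x j ∧ x j < b j + 1 := fun j _ => hxb j
        exact hbS.2 ((key x s b hsV.1 hbS.1 hsl htl).mp hsV)
    · rcases hb with ⟨t, htV, rfl⟩ | hbS
      · have htl := lineOf x t hxb
        have hal : ∀ j, j ≠ k → a j ≤ x j ∧ x j < a j + 1 := fun j _ => hxa j
        exact haS.2 ((key x t a htV.1 haS.1 htl hal).mp htV)
      · exact Set.disjoint_left.mp (hS.1 a haS.1 b hbS.1 hne) hxa hxb
  · ext x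
    simp only [Set.mem_iUnion, Set.mem_univ, iff_true]
    have hx : x ∈ ⋃ t ∈ S, Cube t := by rw [hS.2]; trivial
    simp only [Set.mem_iUnion] at hx
    obtain ⟨s, hsS, hsc⟩ := hx
    by_cases hsV : s ∈ V
    · -- find cube covering x + e, it is in V, so its shift covers x
      have hy : x + e ∈ ⋃ t ∈ S, Cube t := by rw [hS.2]; trivial
      simp only [Set.mem_iUnion] at hy
      obtain ⟨t, htS, htc⟩ := hy
      have htl : ∀ j, j ≠ k → t j ≤ x j ∧ x j < t j + 1 := by
        intro j hj
        have := htc j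
        simp only [Pi.add_apply, he, smul_single_apply_ne k m hj, add_zero] at this
        exact this
      have hsl : ∀ j, j ≠ k → s j ≤ x j ∧ x j < s j + 1 := fun j _ => hsc j
      have htV : t ∈ V := (key x s t hsS htS hsl htl).mp hsV
      exact ⟨t - e, Set.mem_union_left _ ⟨t, htV, rfl⟩, (mem_cube_sub k m t x).mpr htc⟩
    · exact ⟨s, Set.mem_union_right _ ⟨hsS, hsV⟩, hsc⟩
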